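/- Fix t > 0 and let μ be the standard Cauchy distribution. For each u ∈ ℝ the equation ∫ dμ(x)/((u−x)² + v²) = 1/t in the unknown v > 0 has a unique positive solution v = v_t(u), and this solution satisfies the algebraic equation u² = (1/v)(1+v)(t − v − v²). -/

import Mathlib

open MeasureTheory Real Filter Topology

lemma ratio_tendsto_one (u v : ℝ) (hv : 0 < v) (l : Filter ℝ)
    (hinv : Tendsto (fun x : ℝ => x⁻¹) l (𝓝 0)) (hne : ∀ᶠ x in l, x ≠ 0) :
    Tendsto (fun x : ℝ => (1 + x ^ 2) / ((x - u) ^ 2 + v ^ 2)) l (𝓝 1) := by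
  have hW : ∀ x : ℝ, 0 < (x - u) ^ 2 + v ^ 2 := fun x => by positivity
  have hGc : ContinuousAt (fun y : ℝ => (y ^ 2 + 1) / ((1 - u * y) ^ 2 + (v * y) ^ 2)) 0 := by
    apply ContinuousAt.div
    · fun_prop
    · fun_prop
    · norm_num
  have hcomp := hGc.tendsto.comp hinv
  norm_num at hcomp
  refine hcomp.congr' ?_
  filter_upwards [hne] with x hx
  have hx2 : x ^ 2 ≠ 0 := pow_ne_zero _ hx
  have hden : (1 - u * x⁻¹) ^ 2 + (v * x⁻¹) ^ 2 ≠ 0 := by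
    have : (1 - u * x⁻¹) ^ 2 + (v * x⁻¹) ^ 2 = ((x - u) ^ 2 + v ^ 2) / x ^ 2 := by
      field_simp
    rw [this]
    exact div_ne_zero (ne_of_gt (hW x)) hx2
  show ((x⁻¹) ^ 2 + 1) / ((1 - u * x⁻¹) ^ 2 + (v * x⁻¹) ^ 2) = (1 + x ^ 2) / ((x - u) ^ 2 + v ^ 2)
  rw [div_eq_div_iff hden (ne_of_gt (hW x))]
  field_simp

lemma my_inv_tendsto_atBot : Tendsto (fun x : ℝ => x⁻¹) atBot (𝓝 (0 : ℝ)) := by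
  have h1 : Tendsto (fun x : ℝ => (-x)⁻¹) atBot (𝓝 (0 : ℝ)) :=
    (tendsto_inv_atTop_zero (𝕜 := ℝ)).comp tendsto_neg_atBot_atTop
  have h : Tendsto (fun x : ℝ => -(-x)⁻¹) atBot (𝓝 (0 : ℝ)) := by
    simpa using h1.neg
  exact h.congr fun x => by rw [inv_neg, neg_neg]

lemma xdiv_tendsto (l : Filter ℝ) (hinv : Tendsto (fun x : ℝ => x⁻¹) l (𝓝 0)) :
    Tendsto (fun x : ℝ => x / (1 + x ^ 2)) l (𝓝 0) := by
  have hb : ∀ᶠ x : ℝ in l, ‖x / (1 + x ^ 2)‖ ≤ |x⁻¹| := by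
    refine Eventually.of_forall fun x => ?_
    rcases eq_or_ne x 0 with rfl | hx
    · simp
    · have h1 : (0:ℝ) < 1 + x ^ 2 := by positivity
      have hax : 0 < |x| := abs_pos.mpr hx
      rw [Real.norm_eq_abs, abs_div, abs_of_pos h1, abs_inv]
      rw [div_le_iff₀ h1, inv_mul_eq_div, le_div_iff₀ hax]
      have : |x| * |x| = x ^ 2 := by rw [← abs_mul, ← sq, abs_of_nonneg (sq_nonneg x)]
      nlinarith
  have hg : Tendsto (fun x : ℝ => |x⁻¹|) l (𝓝 0) := by
    simpa using hinv.abs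
  exact squeeze_zero_norm' hb hg

set_option maxHeartbeats 1000000 in
lemma cauchy_integral_eval (u v : ℝ) (hv : 0 < v) :
    ∫ x : ℝ, (1 / (π * (1 + x ^ 2))) * (1 / ((u - x) ^ 2 + v ^ 2))
      = (1 + v) / (v * (u ^ 2 + (1 + v) ^ 2)) := by
  have hπ : (0:ℝ) < π := Real.pi_pos
  have hv0 : v ≠ 0 := ne_of_gt hv
  have hW : ∀ x : ℝ, 0 < (x - u) ^ 2 + v ^ 2 := fun x => by positivity
  have hW' : ∀ x : ℝ, 0 < (u - x) ^ 2 + v ^ 2 := fun x => by positivity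
  have h1x : ∀ x : ℝ, (0:ℝ) < 1 + x ^ 2 := fun x => by positivity
  -- integrability
  have hint : Integrable (fun x : ℝ => (1 / (π * (1 + x ^ 2))) * (1 / ((u - x) ^ 2 + v ^ 2))) := by
    have h1 : Integrable (fun x : ℝ => (1 / (π * v ^ 2)) * (1 + x ^ 2)⁻¹) :=
      integrable_inv_one_add_sq.const_mul _
    refine h1.mono ?_ (Filter.Eventually.of_forall fun x => ?_)
    · apply Continuous.aestronglyMeasurable
      apply Continuous.mul
      · exact continuous_const.div (by fun_prop) fun x => by positivity
      · exact continuous_const.div (by fun_prop) fun x => ne_of_gt (hW' x)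
    · rw [Real.norm_eq_abs, Real.norm_eq_abs, abs_of_nonneg (by positivity),
        abs_of_nonneg (by positivity)]
      calc (1 / (π * (1 + x ^ 2))) * (1 / ((u - x) ^ 2 + v ^ 2))
          ≤ (1 / (π * (1 + x ^ 2))) * (1 / v ^ 2) := by
            refine mul_le_mul_of_nonneg_left ?_ (by positivity)
            exact one_div_le_one_div_of_le (by positivity) (by nlinarith [sq_nonneg (u - x)])
        _ = (1 / (π * v ^ 2)) * (1 + x ^ 2)⁻¹ := by
            field_simp
  have hlin_top : Tendsto (fun x : ℝ => (x - u) / v) atTop atTop :=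
    (tendsto_atTop_add_const_right _ (-u) tendsto_id).atTop_div_const hv
  have hlin_bot : Tendsto (fun x : ℝ => (x - u) / v) atBot atBot :=
    (tendsto_atBot_add_const_right _ (-u) tendsto_id).atBot_div_const hv
  by_cases hdeg : u = 0 ∧ v = 1
  · obtain ⟨rfl, rfl⟩ := hdeg
    set F : ℝ → ℝ := fun x => (1 / (2 * π)) * (arctan x + x / (1 + x ^ 2)) with hF
    have hder : ∀ x : ℝ, HasDerivAt F
        ((1 / (π * (1 + x ^ 2))) * (1 / (((0:ℝ) - x) ^ 2 + (1:ℝ) ^ 2))) x := by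
      intro x
      have hden : HasDerivAt (fun x : ℝ => 1 + x ^ 2) (2 * x) x := by
        simpa using (hasDerivAt_pow 2 x).const_add 1
      have h2 : HasDerivAt (fun x : ℝ => x / (1 + x ^ 2))
          ((1 * (1 + x ^ 2) - x * (2 * x)) / (1 + x ^ 2) ^ 2) x :=
        (hasDerivAt_id x).div hden (ne_of_gt (h1x x))
      have h := ((hasDerivAt_arctan x).add h2).const_mul (1 / (2 * π))
      refine h.congr_deriv ?_
      have := h1x x
      field_simp
      ring
    have htop : Tendsto F atTop (𝓝 ((1 / (2 * π)) * (π / 2 + 0))) :=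
      (((tendsto_nhds_of_tendsto_nhdsWithin tendsto_arctan_atTop).add
        (xdiv_tendsto atTop tendsto_inv_atTop_zero)).const_mul _)
    have hbot : Tendsto F atBot (𝓝 ((1 / (2 * π)) * (-(π / 2) + 0))) :=
      (((tendsto_nhds_of_tendsto_nhdsWithin tendsto_arctan_atBot).add
        (xdiv_tendsto atBot my_inv_tendsto_atBot)).const_mul _)
    rw [MeasureTheory.integral_of_hasDerivAt_of_tendsto hder hint hbot htop]
    field_simp
    ring
  · -- nondegenerate case
    have h1 : 0 < u ^ 2 + (v - 1) ^ 2 := by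
      obtain hu | hv1 := not_and_or.mp hdeg
      · have : u ≠ 0 := hu
        positivity
      · have : v - 1 ≠ 0 := sub_ne_zero.mpr hv1
        positivity
    have h2 : 0 < u ^ 2 + (v + 1) ^ 2 := by nlinarith [sq_nonneg u]
    have hdpos : 0 < (u ^ 2 + v ^ 2 - 1) ^ 2 + 4 * u ^ 2 := by
      have : (u ^ 2 + v ^ 2 - 1) ^ 2 + 4 * u ^ 2
          = (u ^ 2 + (v - 1) ^ 2) * (u ^ 2 + (v + 1) ^ 2) := by ring
      rw [this]; exact mul_pos h1 h2
    set d : ℝ := (u ^ 2 + v ^ 2 - 1) ^ 2 + 4 * u ^ 2 with hd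
    have hd0 : d ≠ 0 := ne_of_gt hdpos
    set c1 : ℝ := (u ^ 2 + v ^ 2 - 1) / d with hc1
    set c2 : ℝ := (1 + u ^ 2 - v ^ 2) / (d * v) with hc2
    set c3 : ℝ := u / d with hc3
    set F : ℝ → ℝ := fun x => (1 / π) * (c1 * arctan x + c2 * arctan ((x - u) / v)
      + c3 * (Real.log (1 + x ^ 2) - Real.log ((x - u) ^ 2 + v ^ 2))) with hF
    have hder : ∀ x : ℝ, HasDerivAt F
        ((1 / (π * (1 + x ^ 2))) * (1 / ((u - x) ^ 2 + v ^ 2))) x := by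
      intro x
      have hA1 : HasDerivAt arctan (1 / (1 + x ^ 2)) x := hasDerivAt_arctan x
      have hinner : HasDerivAt (fun x : ℝ => (x - u) / v) (1 / v) x := by
        simpa using ((hasDerivAt_id x).sub_const u).div_const v
      have hA2 : HasDerivAt (fun x : ℝ => arctan ((x - u) / v))
          (1 / (1 + ((x - u) / v) ^ 2) * (1 / v)) x :=
        (hasDerivAt_arctan _).comp x hinner
      have hA2' : HasDerivAt (fun x : ℝ => arctan ((x - u) / v))
          (v / ((x - u) ^ 2 + v ^ 2)) x := by
        convert hA2 using 1
        have := hW x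
        field_simp
        ring
      have hinner1 : HasDerivAt (fun x : ℝ => 1 + x ^ 2) (2 * x) x := by
        simpa using (hasDerivAt_pow 2 x).const_add 1
      have hinner2 : HasDerivAt (fun x : ℝ => (x - u) ^ 2 + v ^ 2) (2 * (x - u)) x := by
        simpa using (((hasDerivAt_id x).sub_const u).pow 2).add_const (v ^ 2)
      have hlog1 : HasDerivAt (fun x : ℝ => Real.log (1 + x ^ 2))
          ((1 + x ^ 2)⁻¹ * (2 * x)) x :=
        by have := (Real.hasDerivAt_log (ne_of_gt (h1x x))).comp x hinner1; exact this
      have hlog2 : HasDerivAt (fun x : ℝ => Real.log ((x - u) ^ 2 + v ^ 2))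
          (((x - u) ^ 2 + v ^ 2)⁻¹ * (2 * (x - u))) x :=
        by have := (Real.hasDerivAt_log (ne_of_gt (hW x))).comp x hinner2; exact this
      have h := (((hA1.const_mul c1).add (hA2'.const_mul c2)).add
        ((hlog1.sub hlog2).const_mul c3)).const_mul (1 / π)
      rw [hF]
      refine h.congr_deriv ?_
      have hx1 := h1x x
      have hx2 := hW x
      rw [hc1, hc2, hc3]
      have huv : (u - x) ^ 2 + v ^ 2 = (x - u) ^ 2 + v ^ 2 := by ring
      rw [huv]
      field_simp
      rw [hd]
      ring
    -- limits
    have hlog_top : Tendsto (fun x : ℝ =>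
        Real.log (1 + x ^ 2) - Real.log ((x - u) ^ 2 + v ^ 2)) atTop (𝓝 0) := by
      have := (Real.continuousAt_log one_ne_zero).tendsto.comp
        (ratio_tendsto_one u v hv atTop tendsto_inv_atTop_zero (eventually_ne_atTop 0))
      simp only [Function.comp, Real.log_one] at this
      refine this.congr fun x => ?_
      exact Real.log_div (ne_of_gt (h1x x)) (ne_of_gt (hW x))
    have hlog_bot : Tendsto (fun x : ℝ =>
        Real.log (1 + x ^ 2) - Real.log ((x - u) ^ 2 + v ^ 2)) atBot (𝓝 0) := by
      have := (Real.continuousAt_log one_ne_zero).tendsto.comp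
        (ratio_tendsto_one u v hv atBot my_inv_tendsto_atBot (eventually_ne_atBot 0))
      simp only [Function.comp, Real.log_one] at this
      refine this.congr fun x => ?_
      exact Real.log_div (ne_of_gt (h1x x)) (ne_of_gt (hW x))
    have harc2_top : Tendsto (fun x : ℝ => arctan ((x - u) / v)) atTop (𝓝 (π / 2)) :=
      (tendsto_nhds_of_tendsto_nhdsWithin tendsto_arctan_atTop).comp hlin_top
    have harc2_bot : Tendsto (fun x : ℝ => arctan ((x - u) / v)) atBot (𝓝 (-(π / 2))) :=
      (tendsto_nhds_of_tendsto_nhdsWithin tendsto_arctan_atBot).comp hlin_bot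
    have htop : Tendsto F atTop (𝓝 ((1 / π) * (c1 * (π / 2) + c2 * (π / 2) + c3 * 0))) := by
      apply Tendsto.const_mul
      exact (((tendsto_nhds_of_tendsto_nhdsWithin tendsto_arctan_atTop).const_mul c1).add
        (harc2_top.const_mul c2)).add (hlog_top.const_mul c3)
    have hbot : Tendsto F atBot (𝓝 ((1 / π) * (c1 * (-(π / 2)) + c2 * (-(π / 2)) + c3 * 0))) := by
      apply Tendsto.const_mul
      exact (((tendsto_nhds_of_tendsto_nhdsWithin tendsto_arctan_atBot).const_mul c1).add
        (harc2_bot.const_mul c2)).add (hlog_bot.const_mul c3)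
    rw [MeasureTheory.integral_of_hasDerivAt_of_tendsto hder hint hbot htop]
    rw [hc1, hc2]
    have h20 : u ^ 2 + (1 + v) ^ 2 ≠ 0 := by
      have h21 : u ^ 2 + (1 + v) ^ 2 = u ^ 2 + (v + 1) ^ 2 := by ring
      rw [h21]; exact ne_of_gt h2
    field_simp
    rw [hd]
    ring

/-- For the standard Cauchy distribution and fixed `t > 0`, the equation
`∫ dμ(x)/((u−x)² + v²) = 1/t` has a unique positive solution `v`, and any such solution
satisfies `u² = (1/v)(1+v)(t − v − v²)`. -/
theorem cauchy_vt_exists_unique (t : ℝ) (ht : 0 < t) (u : ℝ) :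
    (∃! v : ℝ, 0 < v ∧
        ∫ x : ℝ, (1 / (π * (1 + x ^ 2))) * (1 / ((u - x) ^ 2 + v ^ 2)) = 1 / t) ∧
      ∀ v : ℝ, 0 < v →
        (∫ x : ℝ, (1 / (π * (1 + x ^ 2))) * (1 / ((u - x) ^ 2 + v ^ 2)) = 1 / t) →
          u ^ 2 = (1 / v) * (1 + v) * (t - v - v ^ 2) := by
  have key : ∀ v : ℝ, 0 < v →
      ((∫ x : ℝ, (1 / (π * (1 + x ^ 2))) * (1 / ((u - x) ^ 2 + v ^ 2)) = 1 / t) ↔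
        t * (1 + v) = v * (u ^ 2 + (1 + v) ^ 2)) := by
    intro v hv
    rw [cauchy_integral_eval u v hv]
    have hpos : 0 < v * (u ^ 2 + (1 + v) ^ 2) := by
      have h2 : 0 < u ^ 2 + (1 + v) ^ 2 := by nlinarith [sq_nonneg u]
      exact mul_pos hv h2
    rw [div_eq_div_iff (ne_of_gt hpos) (ne_of_gt ht)]
    constructor <;> intro h <;> linarith
  have uniq : ∀ v1 v2 : ℝ, 0 < v1 → 0 < v2 →
      t * (1 + v1) = v1 * (u ^ 2 + (1 + v1) ^ 2) →
      t * (1 + v2) = v2 * (u ^ 2 + (1 + v2) ^ 2) → v1 = v2 := by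
    intro v1 v2 h1 h2 e1 e2
    by_contra hne
    have key2 : u ^ 2 * (v1 - v2)
        + (1 + v1) * (1 + v2) * (v1 * (1 + v1) - v2 * (1 + v2)) = 0 := by
      linear_combination -(1 + v2) * e1 + (1 + v1) * e2
    have hp : (0:ℝ) < (1 + v1) * (1 + v2) :=
      mul_pos (by linarith) (by linarith)
    rcases lt_or_gt_of_ne hne with h | h
    · have hq : v1 * (1 + v1) - v2 * (1 + v2) < 0 := by nlinarith
      nlinarith [key2, mul_neg_of_pos_of_neg hp hq,
        mul_nonneg (sq_nonneg u) (by linarith : (0:ℝ) ≤ v2 - v1)]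
    · have hq : v2 * (1 + v2) - v1 * (1 + v1) < 0 := by nlinarith
      nlinarith [key2, mul_pos hp (by linarith : (0:ℝ) < v1 * (1 + v1) - v2 * (1 + v2)),
        mul_nonneg (sq_nonneg u) (by linarith : (0:ℝ) ≤ v1 - v2)]
  constructor
  · -- existence and uniqueness
    set f : ℝ → ℝ := fun v => v * (u ^ 2 + (1 + v) ^ 2) - t * (1 + v) with hf
    set a : ℝ := min 1 (t / (u ^ 2 + 4)) with ha'
    have ha : 0 < a := lt_min one_pos (by positivity)
    set b : ℝ := max 1 t with hb'
    have hb1 : (1:ℝ) ≤ b := le_max_left _ _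
    have hbt : t ≤ b := le_max_right _ _
    have hab : a ≤ b := le_trans (min_le_left _ _) hb1
    have hcont : ContinuousOn f (Set.Icc a b) := by fun_prop
    have hfa : f a ≤ 0 := by
      have ha1 : a ≤ 1 := min_le_left _ _
      have ha2 : a ≤ t / (u ^ 2 + 4) := min_le_right _ _
      have ha3 : a * (u ^ 2 + 4) ≤ t := by
        rw [← le_div_iff₀ (by positivity)]; exact ha2
      have h4 : (1 + a) ^ 2 ≤ 4 := by nlinarith
      have h5 : a * (1 + a) ^ 2 ≤ a * 4 := by nlinarith [mul_le_mul_of_nonneg_left h4 ha.le]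
      simp only [hf]
      nlinarith [mul_pos ht ha]
    have hfb : 0 ≤ f b := by
      simp only [hf]
      nlinarith
    have h0mem : (0:ℝ) ∈ Set.Icc (f a) (f b) := ⟨hfa, hfb⟩
    obtain ⟨v, hvmem, hfv⟩ := intermediate_value_Icc hab hcont h0mem
    have hvpos : 0 < v := lt_of_lt_of_le ha hvmem.1
    have hveq : t * (1 + v) = v * (u ^ 2 + (1 + v) ^ 2) := by
      simp only [hf] at hfv; linarith
    refine ⟨v, ⟨hvpos, (key v hvpos).mpr hveq⟩, ?_⟩
    rintro w ⟨hwpos, hwint⟩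
    exact uniq w v hwpos hvpos ((key w hwpos).mp hwint) hveq
  · intro v hv hint
    have hveq := (key v hv).mp hint
    have hv0 : v ≠ 0 := ne_of_gt hv
    field_simp
    linear_combination -hveq
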